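/- arXiv:0901.1455 — 2 statements merged into one kernel-verified Lean document; each statement's English description precedes it below -/
import Mathlib

section
/- Let D_λ = diag(λ₁,…,λ_d) with all λ_j > 0, let D_{1/λ} = diag(1/λ₁,…,1/λ_d), and let R be a real d×d matrix satisfying R D_λ = -D_λ Rᵀ. For smooth functions φ on ℝ^d define L⁰φ(x) = (1/2)Δφ(x) - (1/2)⟨D_{1/λ}x, ∇φ(x)⟩ and ℛφ(x) = ⟨Rx, ∇φ(x)⟩. Then the following are equivalent: (a) L⁰(ℛφ) = ℛ(L⁰φ) for every Schwartz function φ; (b) R + Rᵀ = 0; (c) R D_λ = D_λ R. -/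
open MeasureTheory Matrix

noncomputable section

/-- The partial derivative `∂_i φ`. -/
def pd {d : ℕ} (i : Fin d) (φ : (Fin d → ℝ) → ℝ) : (Fin d → ℝ) → ℝ :=
  fun x => fderiv ℝ φ x (Pi.single i 1)

/-- The Laplacian `Δφ = ∑ i ∂_i² φ`. -/
def lap {d : ℕ} (φ : (Fin d → ℝ) → ℝ) (x : Fin d → ℝ) : ℝ :=
  ∑ i, pd i (pd i φ) x

/-- `L⁰φ(x) = (1/2)Δφ(x) - (1/2)⟨D_{1/λ} x, ∇φ(x)⟩` with `D_{1/λ} = diag(1/λ₁,…,1/λ_d)`. -/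
def Lsym {d : ℕ} (lam : Fin d → ℝ) (φ : (Fin d → ℝ) → ℝ) (x : Fin d → ℝ) : ℝ :=
  (1 / 2) * lap φ x - (1 / 2) * ∑ i, (1 / lam i) * x i * pd i φ x

/-- `ℛφ(x) = ⟨Rx, ∇φ(x)⟩`. -/
def Rop {d : ℕ} (R : Matrix (Fin d) (Fin d) ℝ) (φ : (Fin d → ℝ) → ℝ) (x : Fin d → ℝ) : ℝ :=
  ∑ i, R.mulVec x i * pd i φ x

end
-- ===== auxiliary machinery =====
noncomputable section
def Aop {d : ℕ} (lam : Fin d → ℝ) (φ : (Fin d → ℝ) → ℝ) (x : Fin d → ℝ) : ℝ :=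
  ∑ i, (1 / lam i) * x i * pd i φ x

def toSchwartz {d : ℕ} (f : (Fin d → ℝ) → ℝ) (h1 : ContDiff ℝ ((⊤:ℕ∞)) f)
    (h2 : HasCompactSupport f) : SchwartzMap (Fin d → ℝ) ℝ where
  toFun := f
  smooth' := h1
  decay' := by
    intro k n
    have hs : HasCompactSupport fun x => ‖x‖ ^ k * ‖iteratedFDeriv ℝ n f x‖ := by
      have : HasCompactSupport fun x => ‖iteratedFDeriv ℝ n f x‖ := (h2.iteratedFDeriv n).norm
      exact this.mul_left
    obtain ⟨C, hC⟩ := hs.exists_bound_of_continuous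
      ((continuous_norm.pow k).mul (h1.continuous_iteratedFDeriv (by exact_mod_cast le_top)).norm)
    exact ⟨C, fun x => by
      have := hC x
      rwa [Real.norm_of_nonneg (by positivity)] at this⟩
end

section AuxLemmas

variable {d : ℕ} {φ f g : (Fin d → ℝ) → ℝ} {x : Fin d → ℝ} {i j m : Fin d}
  {R : Matrix (Fin d) (Fin d) ℝ} {lam : Fin d → ℝ}

theorem pd_add (hf : DifferentiableAt ℝ f x) (hg : DifferentiableAt ℝ g x) :
    pd i (fun y => f y + g y) x = pd i f x + pd i g x := by
  unfold pd; rw [fderiv_fun_add hf hg]; simp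

theorem pd_sub (hf : DifferentiableAt ℝ f x) (hg : DifferentiableAt ℝ g x) :
    pd i (fun y => f y - g y) x = pd i f x - pd i g x := by
  unfold pd; rw [fderiv_fun_sub hf hg]; simp

theorem smooth_coord : ContDiff ℝ ((⊤:ℕ∞)) (fun y : Fin d → ℝ => y m) :=
  (ContinuousLinearMap.proj (R := ℝ) (φ := fun _ : Fin d => ℝ) m).contDiff

theorem smooth_mv : ContDiff ℝ ((⊤:ℕ∞)) (fun y : Fin d → ℝ => R.mulVec y j) := by
  have : (fun y : Fin d → ℝ => R.mulVec y j) = fun y => ∑ m, R j m * y m := by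
    funext y; simp [Matrix.mulVec, dotProduct]
  rw [this]
  exact ContDiff.sum fun m _ => contDiff_const.mul smooth_coord

theorem pd_coord' : pd i (fun y : Fin d → ℝ => y m) x = if m = i then 1 else 0 := by
  unfold pd
  have : (fun y : Fin d → ℝ => y m) = ⇑(ContinuousLinearMap.proj (R := ℝ) (φ := fun _ : Fin d => ℝ) m) := rfl
  rw [this, ContinuousLinearMap.fderiv]
  simp [Pi.single_apply, eq_comm]

theorem pd_sum' {s : Finset (Fin d)} {f : Fin d → (Fin d → ℝ) → ℝ}
    (h : ∀ j ∈ s, DifferentiableAt ℝ (f j) x) :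
    pd i (fun y => ∑ j ∈ s, f j y) x = ∑ j ∈ s, pd i (f j) x := by
  unfold pd; rw [fderiv_fun_sum h]; simp

theorem pd_const_mul' (c : ℝ) (hf : DifferentiableAt ℝ f x) :
    pd i (fun y => c * f y) x = c * pd i f x := by
  unfold pd; rw [fderiv_const_mul hf c]; simp

theorem pd_mulVec : pd i (fun y => R.mulVec y j) x = R j i := by
  have e : (fun y : Fin d → ℝ => R.mulVec y j) = fun y => ∑ m, R j m * y m := by
    funext y; simp [Matrix.mulVec, dotProduct]
  rw [e, pd_sum' (fun m _ => (contDiff_const.mul smooth_coord).differentiable (by simp) x)]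
  have : ∀ m, pd i (fun y : Fin d → ℝ => R j m * y m) x = R j m * (if m = i then 1 else 0) := by
    intro m
    rw [pd_const_mul' _ (smooth_coord.differentiable (by simp) x), pd_coord']
  simp [this]

theorem pd_smooth' (hφ : ContDiff ℝ ((⊤:ℕ∞)) φ) (i : Fin d) : ContDiff ℝ ((⊤:ℕ∞)) (pd i φ) := by
  unfold pd
  exact (hφ.fderiv_right (m := ((⊤:ℕ∞))) (by exact_mod_cast le_top)).clm_apply contDiff_const

theorem pd_comm' (hφ : ContDiff ℝ ((⊤:ℕ∞)) φ) (i j : Fin d) (x : Fin d → ℝ) :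
    pd i (pd j φ) x = pd j (pd i φ) x := by
  have h1 : ∀ y, HasFDerivAt φ (fderiv ℝ φ y) y :=
    fun y => (hφ.differentiable (by simp) y).hasFDerivAt
  have h2 : HasFDerivAt (fderiv ℝ φ) (fderiv ℝ (fderiv ℝ φ) x) x :=
    ((hφ.fderiv_right (m := ((⊤:ℕ∞))) (by exact_mod_cast le_top)).differentiable (by simp) x).hasFDerivAt
  have hsymm := second_derivative_symmetric h1 h2 (Pi.single j 1) (Pi.single i 1)
  have key : ∀ a b : Fin d, pd a (pd b φ) x
      = fderiv ℝ (fderiv ℝ φ) x (Pi.single a 1) (Pi.single b 1) := by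
    intro a b
    unfold pd
    rw [fderiv_clm_apply (((hφ.fderiv_right (m := ((⊤:ℕ∞))) (by exact_mod_cast le_top)).differentiable (by simp)) x)
      (differentiableAt_const _)]
    simp
  rw [key, key]
  exact hsymm.symm

theorem pd_mul' (hf : DifferentiableAt ℝ f x) (hg : DifferentiableAt ℝ g x) :
    pd i (fun y => f y * g y) x = pd i f x * g x + f x * pd i g x := by
  unfold pd
  rw [fderiv_fun_mul hf hg]
  simp only [ContinuousLinearMap.add_apply, ContinuousLinearMap.smul_apply, smul_eq_mul]
  ring

theorem smooth_Rop (hφ : ContDiff ℝ ((⊤:ℕ∞)) φ) : ContDiff ℝ ((⊤:ℕ∞)) (Rop R φ) := by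
  unfold Rop
  exact ContDiff.sum fun j _ => smooth_mv.mul (pd_smooth' hφ j)

theorem smooth_lap (hφ : ContDiff ℝ ((⊤:ℕ∞)) φ) : ContDiff ℝ ((⊤:ℕ∞)) (lap φ) := by
  unfold lap
  exact ContDiff.sum fun i _ => pd_smooth' (pd_smooth' hφ i) i

theorem smooth_Aop (hφ : ContDiff ℝ ((⊤:ℕ∞)) φ) : ContDiff ℝ ((⊤:ℕ∞)) (Aop lam φ) := by
  unfold Aop
  exact ContDiff.sum fun i _ => (contDiff_const.mul smooth_coord).mul (pd_smooth' hφ i)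

theorem smooth_Lsym (hφ : ContDiff ℝ ((⊤:ℕ∞)) φ) : ContDiff ℝ ((⊤:ℕ∞)) (Lsym lam φ) := by
  have : Lsym lam φ = fun y => (1/2) * lap φ y - (1/2) * Aop lam φ y := rfl
  rw [this]
  exact (contDiff_const.mul (smooth_lap hφ)).sub (contDiff_const.mul (smooth_Aop hφ))

theorem pd_Rop (hφ : ContDiff ℝ ((⊤:ℕ∞)) φ) :
    pd i (Rop R φ) x = ∑ j, (R j i * pd j φ x + R.mulVec x j * pd i (pd j φ) x) := by
  have e : Rop R φ = fun y => ∑ j, R.mulVec y j * pd j φ y := rfl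
  rw [e, pd_sum' (fun j _ =>
    ((smooth_mv.mul (pd_smooth' hφ j)).differentiable (by simp) x))]
  refine Finset.sum_congr rfl fun j _ => ?_
  rw [pd_mul' (smooth_mv.differentiable (by simp) x)
    ((pd_smooth' hφ j).differentiable (by simp) x), pd_mulVec]

theorem pd_pd_Rop (hφ : ContDiff ℝ ((⊤:ℕ∞)) φ) :
    pd i (pd m (Rop R φ)) x = ∑ j, (R j m * pd i (pd j φ) x +
      (R j i * pd m (pd j φ) x + R.mulVec x j * pd i (pd m (pd j φ)) x)) := by
  have e : pd m (Rop R φ) = fun y =>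
      ∑ j, (R j m * pd j φ y + R.mulVec y j * pd m (pd j φ) y) :=
    funext fun y => pd_Rop hφ
  rw [e, pd_sum' (f := fun j y => R j m * pd j φ y + R.mulVec y j * pd m (pd j φ) y) (fun j _ =>
    ((contDiff_const.mul (pd_smooth' hφ j)).differentiable (by simp) x).add
    ((smooth_mv.mul (pd_smooth' (pd_smooth' hφ j) m)).differentiable (by simp) x))]
  refine Finset.sum_congr rfl fun j _ => ?_
  rw [pd_add ((contDiff_const.mul (pd_smooth' hφ j)).differentiable (by simp) x)
    ((smooth_mv.mul (pd_smooth' (pd_smooth' hφ j) m)).differentiable (by simp) x),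
    pd_const_mul' _ ((pd_smooth' hφ j).differentiable (by simp) x),
    pd_mul' (smooth_mv.differentiable (by simp) x)
      ((pd_smooth' (pd_smooth' hφ j) m).differentiable (by simp) x), pd_mulVec]

theorem pd_lap (hφ : ContDiff ℝ ((⊤:ℕ∞)) φ) :
    pd j (lap φ) x = ∑ i, pd i (pd i (pd j φ)) x := by
  have e : lap φ = fun y => ∑ i, pd i (pd i φ) y := rfl
  rw [e, pd_sum' (fun i _ =>
    ((pd_smooth' (pd_smooth' hφ i) i).differentiable (by simp) x))]
  refine Finset.sum_congr rfl fun i _ => ?_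
  rw [pd_comm' (pd_smooth' hφ i) j i x,
    show pd j (pd i φ) = pd i (pd j φ) from funext fun y => pd_comm' hφ j i y]

theorem pd_Aop (hφ : ContDiff ℝ ((⊤:ℕ∞)) φ) :
    pd j (Aop lam φ) x = (1 / lam j) * pd j φ x +
      ∑ i, (1 / lam i) * x i * pd j (pd i φ) x := by
  have e : Aop lam φ = fun y => ∑ i, (1 / lam i) * y i * pd i φ y := rfl
  rw [e, pd_sum' (fun i _ =>
    (((contDiff_const.mul smooth_coord).mul (pd_smooth' hφ i)).differentiable (by simp) x))]
  have step : ∀ i, pd j (fun y => 1 / lam i * y i * pd i φ y) x =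
      (1 / lam i) * (if i = j then 1 else 0) * pd i φ x
        + (1 / lam i) * x i * pd j (pd i φ) x := by
    intro i
    rw [pd_mul' ((contDiff_const.mul smooth_coord).differentiable (by simp) x)
      ((pd_smooth' hφ i).differentiable (by simp) x),
      pd_const_mul' _ (smooth_coord.differentiable (by simp) x), pd_coord']
  simp only [step]
  rw [Finset.sum_add_distrib]
  congr 1
  simp [Finset.sum_ite_eq, mul_ite]

theorem pd_Lsym (hφ : ContDiff ℝ ((⊤:ℕ∞)) φ) :
    pd j (Lsym lam φ) x = (1/2) * pd j (lap φ) x - (1/2) * pd j (Aop lam φ) x := by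
  have e : Lsym lam φ = fun y => (1/2) * lap φ y - (1/2) * Aop lam φ y := rfl
  rw [e, pd_sub ((contDiff_const.mul (smooth_lap hφ)).differentiable (by simp) x)
    ((contDiff_const.mul (smooth_Aop hφ)).differentiable (by simp) x),
    pd_const_mul' _ ((smooth_lap hφ).differentiable (by simp) x),
    pd_const_mul' _ ((smooth_Aop hφ).differentiable (by simp) x)]

theorem hRc_aux (hlam : ∀ j, 0 < lam j)
    (hR : R * Matrix.diagonal lam = -(Matrix.diagonal lam * Rᵀ)) (i j : Fin d) :
    (1/lam i) * R i j + (1/lam j) * R j i = 0 := by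
  have h : R i j * lam j = -(lam i * R j i) := by
    simpa [Matrix.mul_diagonal, Matrix.diagonal_mul] using congrFun (congrFun hR i) j
  have hi := (hlam i).ne'
  have hj := (hlam j).ne'
  field_simp
  linear_combination h

theorem comm_eq (hlam : ∀ j, 0 < lam j)
    (hR : R * Matrix.diagonal lam = -(Matrix.diagonal lam * Rᵀ))
    (hφ : ContDiff ℝ ((⊤:ℕ∞)) φ) (x : Fin d → ℝ) :
    Lsym lam (Rop R φ) x - Rop R (Lsym lam φ) x =
      (1/2) * (∑ i, ∑ j, (R i j + R j i) * pd i (pd j φ) x)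
        - (1/2) * ∑ j, (∑ i, (R i j + R j i) * (1/lam i) * x i) * pd j φ x := by
  have ha : ∀ j, R.mulVec x j = ∑ m, R j m * x m := by
    intro j; simp [Matrix.mulVec, dotProduct]
  have eA : Lsym lam (Rop R φ) x = ∑ i, ∑ j,
      (R j i * pd i (pd j φ) x + (1/2) * (R.mulVec x j * pd i (pd i (pd j φ)) x)
        - (1/2) * ((1/lam i) * x i * (R j i * pd j φ x))
        - (1/2) * ((1/lam i) * x i * (R.mulVec x j * pd i (pd j φ) x))) := by
    have h1 : Lsym lam (Rop R φ) x = (1/2) * lap (Rop R φ) x - (1/2) * Aop lam (Rop R φ) x := rfl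
    have h2 : lap (Rop R φ) x = ∑ i, ∑ j, (R j i * pd i (pd j φ) x +
        (R j i * pd i (pd j φ) x + R.mulVec x j * pd i (pd i (pd j φ)) x)) :=
      Finset.sum_congr rfl fun i _ => pd_pd_Rop hφ
    have h3 : Aop lam (Rop R φ) x = ∑ i, (1/lam i) * x i *
        (∑ j, (R j i * pd j φ x + R.mulVec x j * pd i (pd j φ) x)) :=
      Finset.sum_congr rfl fun i _ => by rw [pd_Rop hφ]
    rw [h1, h2, h3]
    simp only [Finset.mul_sum, ← Finset.sum_sub_distrib]
    exact Finset.sum_congr rfl fun i _ => Finset.sum_congr rfl fun j _ => by ring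
  have eB : Rop R (Lsym lam φ) x = ∑ i, ∑ j,
      ((1/2) * (R.mulVec x j * pd i (pd i (pd j φ)) x)
        - (1/2) * (R j i * x i * ((1/lam j) * pd j φ x))
        - (1/2) * (R.mulVec x j * ((1/lam i) * x i * pd j (pd i φ) x))) := by
    have h1 : Rop R (Lsym lam φ) x = ∑ j, R.mulVec x j * pd j (Lsym lam φ) x := rfl
    have h2 : ∀ j, R.mulVec x j * pd j (Lsym lam φ) x = ∑ i,
        ((1/2) * (R.mulVec x j * pd i (pd i (pd j φ)) x)
          - (1/2) * (R j i * x i * ((1/lam j) * pd j φ x))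
          - (1/2) * (R.mulVec x j * ((1/lam i) * x i * pd j (pd i φ) x))) := by
      intro j
      rw [pd_Lsym hφ, pd_lap hφ, pd_Aop hφ]
      have hmid : R.mulVec x j * ((1/lam j) * pd j φ x)
          = ∑ i, R j i * x i * ((1/lam j) * pd j φ x) := by
        rw [ha j, Finset.sum_mul]
      simp only [Finset.sum_sub_distrib, ← Finset.mul_sum]
      rw [← hmid]
      ring
    rw [h1]
    rw [Finset.sum_congr rfl fun j _ => h2 j]
    exact Finset.sum_comm
  have eC : (1/2) * (∑ i, ∑ j, (R i j + R j i) * pd i (pd j φ) x)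
        - (1/2) * ∑ j, (∑ i, (R i j + R j i) * (1/lam i) * x i) * pd j φ x
      = ∑ i, ∑ j, ((1/2) * ((R i j + R j i) * pd i (pd j φ) x)
        - (1/2) * ((R i j + R j i) * (1/lam i) * x i * pd j φ x)) := by
    have t2 : ∑ j, (∑ i, (R i j + R j i) * (1/lam i) * x i) * pd j φ x
        = ∑ i, ∑ j, ((R i j + R j i) * (1/lam i) * x i * pd j φ x) := by
      rw [Finset.sum_comm]
      exact Finset.sum_congr rfl fun j _ => by rw [Finset.sum_mul]
    rw [t2]
    simp only [Finset.mul_sum, ← Finset.sum_sub_distrib]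
  rw [← sub_eq_zero, eA, eB, eC]
  have key0 : ∀ (H : Fin d → Fin d → ℝ), ∑ i, ∑ j, (H i j - H j i) = (0:ℝ) := by
    intro H
    have e : ∑ i, ∑ j, (H i j - H j i) = (∑ i, ∑ j, H i j) - (∑ i, ∑ j, H j i) := by
      simp [Finset.sum_sub_distrib]
    rw [e, Finset.sum_comm]
    exact sub_self _
  have hkey := key0 (fun i j => (1/2) * (R j i * pd i (pd j φ) x))
  rw [← hkey]
  simp only [← Finset.sum_sub_distrib]
  refine Finset.sum_congr rfl fun i _ => Finset.sum_congr rfl fun j _ => ?_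
  have hcomm := pd_comm' hφ i j x
  have hrc := hRc_aux hlam hR i j
  linear_combination (-(1/2) * R i j - (1/2) * R.mulVec x j * (1/lam i) * x i) * hcomm
    + ((1/2) * x i * pd j φ x) * hrc

end AuxLemmas

/-- Let `D_λ = diag(λ₁,…,λ_d)` with all `λ_j > 0` and let `R` be a real
`d×d` matrix with `R D_λ = -D_λ Rᵀ`. Then the following are equivalent:
(a) `L⁰(ℛφ) = ℛ(L⁰φ)` for every Schwartz function `φ`; (b) `R + Rᵀ = 0`;
(c) `R D_λ = D_λ R`. -/
theorem normality_equivalences (d : ℕ) (hd : 1 ≤ d)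
    (lam : Fin d → ℝ) (hlam : ∀ j, 0 < lam j)
    (R : Matrix (Fin d) (Fin d) ℝ)
    (hR : R * Matrix.diagonal lam = -(Matrix.diagonal lam * Rᵀ)) :
    ((∀ φ : SchwartzMap (Fin d → ℝ) ℝ, ∀ x : Fin d → ℝ,
        Lsym lam (Rop R ⇑φ) x = Rop R (Lsym lam ⇑φ) x) ↔ R + Rᵀ = 0) ∧
      (R + Rᵀ = 0 ↔ R * Matrix.diagonal lam = Matrix.diagonal lam * R) := by
  have part2 : (R + Rᵀ = 0 ↔ R * Matrix.diagonal lam = Matrix.diagonal lam * R) := by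
    constructor
    · intro h
      have ht : Rᵀ = -R := by linear_combination (norm := (ext i j; simp)) h
      rw [hR, ht]
      simp [Matrix.mul_neg]
    · intro h
      have h2 : Matrix.diagonal lam * (R + Rᵀ) = 0 := by
        rw [Matrix.mul_add, ← h, hR]; exact neg_add_cancel _
      ext i j
      have h3 := congrFun (congrFun h2 i) j
      rw [Matrix.diagonal_mul] at h3
      simp only [Matrix.zero_apply] at h3 ⊢
      exact (mul_eq_zero.mp h3).resolve_left (ne_of_gt (hlam i))
  refine ⟨⟨?_, ?_⟩, part2⟩
  · -- (a) → (b)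
    intro hA
    ext k l
    simp only [Matrix.add_apply, Matrix.transpose_apply, Matrix.zero_apply]
    set b : ContDiffBump (0 : Fin d → ℝ) := ⟨1, 2, one_pos, one_lt_two⟩ with hbdef
    have hsm : ContDiff ℝ ((⊤:ℕ∞)) (fun x : Fin d → ℝ => x k * x l * b x) :=
      (smooth_coord.mul smooth_coord).mul (b.contDiff (n := (⊤:ℕ∞)))
    have hcs : HasCompactSupport (fun x : Fin d → ℝ => x k * x l * b x) :=
      HasCompactSupport.mul_left b.hasCompactSupport
    set φ := toSchwartz _ hsm hcs with hφdef
    have hsφ : ContDiff ℝ ((⊤:ℕ∞)) ⇑φ := hsm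
    have h0 := comm_eq hlam hR hsφ 0
    rw [hA φ 0, sub_self] at h0
    have hEq : ⇑φ =ᶠ[nhds (0 : Fin d → ℝ)] (fun y => y k * y l) := by
      filter_upwards [b.eventuallyEq_one] with y hy
      show y k * y l * b y = y k * y l
      simp [hy]
    have hd1 : ∀ j : Fin d, pd j ⇑φ =ᶠ[nhds 0] pd j (fun y => y k * y l) := by
      intro j
      filter_upwards [hEq.fderiv (𝕜 := ℝ)] with y hy
      show fderiv ℝ ⇑φ y (Pi.single j 1) = _
      rw [hy]; rfl
    have hP1 : ∀ (j : Fin d), pd j (fun y : Fin d → ℝ => y k * y l)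
        = fun y => (if k = j then 1 else 0) * y l + (if l = j then 1 else 0) * y k := by
      intro j; funext y
      rw [pd_mul' (smooth_coord.differentiable (by simp) y)
        (smooth_coord.differentiable (by simp) y), pd_coord', pd_coord']
      ring
    have hpp : ∀ i j : Fin d, pd i (pd j ⇑φ) 0 =
        (if k = j then 1 else 0) * (if l = i then 1 else 0)
          + (if l = j then 1 else 0) * (if k = i then 1 else 0) := by
      intro i j
      have h1 : pd i (pd j ⇑φ) 0 = pd i (pd j (fun y => y k * y l)) 0 := by
        show fderiv ℝ (pd j ⇑φ) 0 (Pi.single i 1)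
          = fderiv ℝ (pd j fun y => y k * y l) 0 (Pi.single i 1)
        rw [(hd1 j).fderiv_eq]
      rw [h1, hP1 j,
        pd_add ((contDiff_const.mul smooth_coord).differentiable (by simp) 0)
          ((contDiff_const.mul smooth_coord).differentiable (by simp) 0),
        pd_const_mul' _ (smooth_coord.differentiable (by simp) 0),
        pd_const_mul' _ (smooth_coord.differentiable (by simp) 0),
        pd_coord', pd_coord']
    simp only [hpp, Pi.zero_apply, mul_zero, zero_mul, Finset.sum_const_zero, sub_zero] at h0
    simp only [mul_add, mul_ite, mul_one, mul_zero, Finset.sum_add_distrib,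
      Finset.sum_ite_irrel, Finset.sum_const_zero,
      Finset.sum_ite_eq, Finset.sum_ite_eq', Finset.mem_univ, if_true] at h0
    linarith
  · -- (b) → (a)
    intro hb φ x
    have h0 := comm_eq hlam hR (φ.smooth ((⊤:ℕ∞))) x
    have hS : ∀ i j, R i j + R j i = 0 := by
      intro i j
      have := congrFun (congrFun hb i) j
      simpa using this
    simp only [hS, zero_mul, mul_zero, zero_mul, Finset.sum_const_zero,
      mul_zero, sub_zero, zero_sub, zero_mul] at h0
    linarith
end

section
/- Let θ > 0 and let c₀, c₁ be constants with 0 < c₀ < 2 < c₁ and c₁²/c₀ < 18/5. Then there exist s₀, β, δ ∈ (0,1) such that for all s ∈ (0, s₀) and all nonzero x, y ∈ ℝ² with ⟨x,y⟩ ≥ 0, x∧y < 0, |x-y| < β|y| and |x∧y| < δ|x||y|: -(9/10) Q_s(x,y) - c₀ θ² s² ⟨x,y⟩ - c₁ θ s (x∧y) ≤ 0. -/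
noncomputable section

/-- `nsq x = |x|²`, the squared Euclidean norm on `ℝ²`. -/
def nsq (x : Fin 2 → ℝ) : ℝ := ∑ i, x i ^ 2

/-- The wedge product `x∧y = x₁y₂ - x₂y₁` on `ℝ²`. -/
def wedge (x y : Fin 2 → ℝ) : ℝ := x 0 * y 1 - x 1 * y 0

/-- The Euclidean inner product `⟨x,y⟩` on `ℝ²`. -/
def dot2 (x y : Fin 2 → ℝ) : ℝ := x 0 * y 0 + x 1 * y 1

/-- `k_{tθ}(x,y) = exp(-(e^{-t}/(1-e^{-2t}))[(1-cos(tθ))⟨x,y⟩ + sin(tθ) x∧y])`. -/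
def kker (t θ : ℝ) (x y : Fin 2 → ℝ) : ℝ :=
  Real.exp (-(Real.exp (-t) / (1 - Real.exp (-2 * t))) *
    ((1 - Real.cos (t * θ)) * dot2 x y + Real.sin (t * θ) * wedge x y))

/-- `τ(s) = log((1+s)/(1-s))` for `s ∈ (0,1)`. -/
def tau (s : ℝ) : ℝ := Real.log ((1 + s) / (1 - s))

/-- `Q_s(x,y) = |(1+s)x - (1-s)y|²`. -/
def Qform (s : ℝ) (x y : Fin 2 → ℝ) : ℝ := nsq ((1 + s) • x - (1 - s) • y)

end

section Aux

private lemma aux_sq {A B β : ℝ} (hA : 0 ≤ A) (hB : 0 ≤ B) (hβ0 : 0 ≤ β)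
    (h : Real.sqrt A < β * Real.sqrt B) : A < β ^ 2 * B := by
  have h2 := mul_self_lt_mul_self (Real.sqrt_nonneg A) h
  rw [Real.mul_self_sqrt hA] at h2
  have h3 := Real.mul_self_sqrt hB
  nlinarith [Real.sqrt_nonneg B]

private lemma aux_dot {a b c d β : ℝ} (hβ0 : 0 < β) (hny : 0 < c ^ 2 + d ^ 2)
    (h1 : (a - c) ^ 2 + (b - d) ^ 2 < β ^ 2 * (c ^ 2 + d ^ 2)) :
    (1 - β) * (c ^ 2 + d ^ 2) < a * c + b * d := by
  have idL : ((a - c) * c + (b - d) * d) ^ 2 + ((a - c) * d - (b - d) * c) ^ 2 =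
      ((a - c) ^ 2 + (b - d) ^ 2) * (c ^ 2 + d ^ 2) := by ring
  have m1 := mul_lt_mul_of_pos_right h1 hny
  have ht2 : ((a - c) * c + (b - d) * d) ^ 2 < (β * (c ^ 2 + d ^ 2)) ^ 2 := by
    nlinarith [sq_nonneg ((a - c) * d - (b - d) * c)]
  nlinarith [ht2, sq_nonneg (((a - c) * c + (b - d) * d) + β * (c ^ 2 + d ^ 2)),
    mul_pos hβ0 hny]

private lemma aux_Dpos {β ny D : ℝ} (hβh : β ≤ 1 / 2) (hny : 0 < ny)
    (hD1 : (1 - β) * ny < D) : 0 < D := by nlinarith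

private lemma aux_D2 {β ny D : ℝ} (hβh : β ≤ 1 / 2) (hny : 0 ≤ ny)
    (hD1 : (1 - β) * ny < D) : ny ≤ 2 * D := by nlinarith

private lemma aux_knv {k β D ny nv : ℝ} (hk0 : 0 < k) (hk1 : k < 1) (hβ0 : 0 < β)
    (hβh : β ≤ 1 / 2) (hβk : β ≤ 1 - k) (hny : 0 < ny) (hD2 : ny ≤ 2 * D)
    (hnvb : nv ≤ 4 * D + β ^ 2 * ny) : k * nv ≤ 4 * D := by
  have e1 : k * β ^ 2 ≤ 2 * (1 - k) := by nlinarith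
  have e2 : 2 * (1 - k) * ny ≤ 4 * (1 - k) * D := by nlinarith
  nlinarith [mul_le_mul_of_nonneg_left hnvb hk0.le, mul_le_mul_of_nonneg_right e1 hny.le]

private lemma aux_qd {k Q D nv W : ℝ} (hk0 : 0 < k) (hQ0 : 0 ≤ Q)
    (h4W : 4 * W ^ 2 ≤ Q * nv) (hknv : k * nv ≤ 4 * D) : k * W ^ 2 ≤ Q * D := by
  nlinarith [mul_le_mul_of_nonneg_left hknv hQ0, mul_le_mul_of_nonneg_left h4W hk0.le]

private lemma aux_C2 {c₀ c₁ θ s k Q D W : ℝ} (hc₀ : 0 < c₀) (hθ : 0 < θ) (hs : 0 < s)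
    (hkc : c₁ ^ 2 = 18 / 5 * c₀ * k) (hQD : k * W ^ 2 ≤ Q * D) :
    (c₁ * θ * s * (-W)) ^ 2 ≤ 4 * (9 / 10 * Q) * (c₀ * θ ^ 2 * s ^ 2 * D) := by
  have h5 : c₁ ^ 2 * W ^ 2 ≤ 18 / 5 * c₀ * (Q * D) := by
    rw [hkc]
    nlinarith [mul_le_mul_of_nonneg_left hQD (show (0:ℝ) ≤ 18 / 5 * c₀ by positivity)]
  nlinarith [mul_le_mul_of_nonneg_left h5 (show (0:ℝ) ≤ θ ^ 2 * s ^ 2 by positivity)]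

private lemma aux_amgm {A B C : ℝ} (hA : 0 ≤ A) (hB : 0 ≤ B) (hC : 0 ≤ C)
    (h : C ^ 2 ≤ 4 * A * B) : C ≤ A + B := by
  nlinarith [sq_nonneg (A - B)]

end Aux

/-- Let `θ > 0` and `0 < c₀ < 2 < c₁` with `c₁²/c₀ < 18/5`. Then there
exist `s₀, β, δ ∈ (0,1)` such that for all `s ∈ (0, s₀)` and all nonzero `x, y ∈ ℝ²` with
`⟨x,y⟩ ≥ 0`, `x∧y < 0`, `|x-y| < β|y|` and `|x∧y| < δ|x||y|`:
`-(9/10) Q_s(x,y) - c₀ θ² s² ⟨x,y⟩ - c₁ θ s (x∧y) ≤ 0`. -/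
theorem Es_nonpositive_near_diagonal (θ c₀ c₁ : ℝ) (hθ : 0 < θ)
    (hc₀ : 0 < c₀) (hc₀2 : c₀ < 2) (hc₁ : 2 < c₁) (hrat : c₁ ^ 2 / c₀ < 18 / 5) :
    ∃ s₀ β δ : ℝ, s₀ ∈ Set.Ioo (0 : ℝ) 1 ∧ β ∈ Set.Ioo (0 : ℝ) 1 ∧ δ ∈ Set.Ioo (0 : ℝ) 1 ∧
      ∀ s : ℝ, 0 < s → s < s₀ → ∀ x y : Fin 2 → ℝ, x ≠ 0 → y ≠ 0 →
        0 ≤ dot2 x y → wedge x y < 0 →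
        Real.sqrt (nsq (x - y)) < β * Real.sqrt (nsq y) →
        |wedge x y| < δ * Real.sqrt (nsq x) * Real.sqrt (nsq y) →
        -(9 / 10) * Qform s x y - c₀ * θ ^ 2 * s ^ 2 * dot2 x y -
            c₁ * θ * s * wedge x y ≤ 0 := by
  have hc₁2 : c₁ ^ 2 < 18 / 5 * c₀ := by
    have := (div_lt_iff₀ hc₀).mp hrat; linarith
  obtain ⟨k, hk⟩ : ∃ k : ℝ, k = c₁ ^ 2 / (18 / 5 * c₀) := ⟨_, rfl⟩
  have hk0 : 0 < k := by rw [hk]; positivity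
  have hk1 : k < 1 := by rw [hk, div_lt_one (by positivity)]; linarith
  have hkc : c₁ ^ 2 = 18 / 5 * c₀ * k := by rw [hk]; field_simp
  obtain ⟨β, hβdef⟩ : ∃ β : ℝ, β = min (1 / 2 : ℝ) (1 - k) := ⟨_, rfl⟩
  have hβ0 : 0 < β := hβdef ▸ lt_min (by norm_num) (by linarith)
  have hβh : β ≤ 1 / 2 := hβdef ▸ min_le_left _ _
  have hβk : β ≤ 1 - k := hβdef ▸ min_le_right _ _
  refine ⟨1 / 2, β, 1 / 2, ⟨by norm_num, by norm_num⟩, ⟨hβ0, by linarith⟩,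
    ⟨by norm_num, by norm_num⟩, ?_⟩
  intro s hs hs' x y hx hy hD hW hβless hδless
  clear hδless
  simp only [nsq, wedge, dot2, Qform, Fin.sum_univ_two, Pi.sub_apply, Pi.smul_apply,
    smul_eq_mul] at hD hW hβless ⊢
  obtain ⟨a, b, c, d, ha, hb, hc, hd⟩ :
      ∃ a b c d : ℝ, x 0 = a ∧ x 1 = b ∧ y 0 = c ∧ y 1 = d := ⟨_, _, _, _, rfl, rfl, rfl, rfl⟩
  rw [ha, hb, hc, hd] at hD hW hβless ⊢
  have hny : 0 < c ^ 2 + d ^ 2 := by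
    rcases (show c ≠ 0 ∨ d ≠ 0 by
      by_contra h; push_neg at h
      exact hy (funext fun i => by fin_cases i <;> simp [hc, hd, h.1, h.2])) with h | h
    · positivity
    · positivity
  have hA : (0 : ℝ) ≤ (a - c) ^ 2 + (b - d) ^ 2 := by positivity
  have h1 : (a - c) ^ 2 + (b - d) ^ 2 < β ^ 2 * (c ^ 2 + d ^ 2) := by
    rw [show β * Real.sqrt (c ^ 2 + d ^ 2) = β * Real.sqrt (c ^ 2 + d ^ 2) from rfl] at hβless
    exact aux_sq hA hny.le hβ0.le hβless
  have hD1 : (1 - β) * (c ^ 2 + d ^ 2) < a * c + b * d := aux_dot hβ0 hny h1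
  obtain ⟨Q, hQ⟩ : ∃ Q : ℝ,
      Q = ((1 + s) * a - (1 - s) * c) ^ 2 + ((1 + s) * b - (1 - s) * d) ^ 2 := ⟨_, rfl⟩
  obtain ⟨W, hWdef⟩ : ∃ W : ℝ, W = a * d - b * c := ⟨_, rfl⟩
  obtain ⟨D, hDdef⟩ : ∃ D : ℝ, D = a * c + b * d := ⟨_, rfl⟩
  obtain ⟨nv, hnv⟩ : ∃ nv : ℝ, nv = (a + c) ^ 2 + (b + d) ^ 2 := ⟨_, rfl⟩
  rw [← hWdef] at hW
  rw [← hDdef] at hD hD1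
  have hQ0 : (0 : ℝ) ≤ Q := by rw [hQ]; positivity
  have h4W : 4 * W ^ 2 ≤ Q * nv := by
    have key : Q * nv = 4 * W ^ 2 +
        (((1 + s) * a - (1 - s) * c) * (a + c) + ((1 + s) * b - (1 - s) * d) * (b + d)) ^ 2 := by
      rw [hQ, hnv, hWdef]; ring
    linarith only [key, sq_nonneg (((1 + s) * a - (1 - s) * c) * (a + c) +
      ((1 + s) * b - (1 - s) * d) * (b + d))]
  have hnvb : nv ≤ 4 * D + β ^ 2 * (c ^ 2 + d ^ 2) := by
    have idq : nv - 4 * D = (a - c) ^ 2 + (b - d) ^ 2 := by rw [hnv, hDdef]; ring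
    linarith only [idq, h1]
  have hD2 : c ^ 2 + d ^ 2 ≤ 2 * D := aux_D2 hβh hny.le hD1
  have hknv : k * nv ≤ 4 * D := aux_knv hk0 hk1 hβ0 hβh hβk hny hD2 hnvb
  have hQD : k * W ^ 2 ≤ Q * D := aux_qd hk0 hQ0 h4W hknv
  have hWneg : 0 < -W := by linarith only [hW]
  have hCpos : 0 ≤ c₁ * θ * s * (-W) := by positivity
  have hDpos : 0 < D := aux_Dpos hβh hny hD1
  have hB : 0 ≤ c₀ * θ ^ 2 * s ^ 2 * D := by positivity
  have hC2 := aux_C2 hc₀ hθ hs hkc hQD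
  have hfin := aux_amgm (by positivity : (0:ℝ) ≤ 9 / 10 * Q) hB hCpos hC2
  rw [← hQ, ← hDdef, ← hWdef]
  linarith only [hfin]
end
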